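/- Under twice-differentiability of f with the bounds ‖∇ₓₓf‖ ≤ L₁, ‖∇_{tx}f‖ ≤ L₂, |∇_{tt}f| ≤ L₃, and |∇ₜf(x;t)| ≤ Z‖∇ₓf(x;t)‖, let g_k = ∇ₓf_k + h∇̃_{tx}f_k where ∇̃_{tx}f_k := (∇ₓf(x_k;t_k) − ∇ₓf(x_k;t_{k−1}))/h satisfies ‖∇̃_{tx}f_k‖ ≤ L₂. If g_k ≠ 0, ζ ≥ Z, and x_{k+1|k} = x_k − ζh g_k/‖g_k‖, then ⟨∇ₓf_k, x_{k+1|k} − x_k⟩ + h∇ₜf_k ≤ 2h²ζL₂, and hence f(x_{k+1|k};t_{k+1}) − f(x_k;t_k) = O(h²), explicitly bounded by (2ζL₂ + ζ²L₁/2 + ζL₂ + L₃/2)h². -/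

import Mathlib

open Set InnerProductSpace

lemma taylor_bound_aux (φ D : ℝ → ℝ) (C a : ℝ) (ha : 0 ≤ a)
    (hφ : ∀ s, HasDerivAt φ (D s) s)
    (hD : ∀ s ∈ Icc (0:ℝ) a, D s ≤ D 0 + C * s) :
    φ a - φ 0 ≤ a * D 0 + C * a ^ 2 / 2 := by
  set ψ : ℝ → ℝ := fun s => D 0 * s + C * s ^ 2 / 2 - φ s with hψ
  have hψd : ∀ s, HasDerivAt ψ (D 0 + C * s - D s) s := by
    intro s
    have h1 : HasDerivAt (fun s : ℝ => D 0 * s + C * s ^ 2 / 2) (D 0 + C * s) s := by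
      have := ((hasDerivAt_id s).const_mul (D 0)).add
        (((hasDerivAt_pow 2 s).const_mul C).div_const 2)
      refine this.congr_deriv ?_
      norm_num
      ring
    exact h1.sub (hφ s)
  have hmono : MonotoneOn ψ (Icc 0 a) := by
    apply monotoneOn_of_deriv_nonneg (convex_Icc 0 a)
    · exact fun s _ => (hψd s).differentiableAt.continuousAt.continuousWithinAt
    · exact fun s _ => (hψd s).differentiableAt.differentiableWithinAt
    · intro s hs
      rw [(hψd s).deriv]
      have := hD s (interior_subset hs)
      linarith
  have h2 := hmono (left_mem_Icc.2 ha) (right_mem_Icc.2 ha) ha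
  simp only [ψ] at h2
  nlinarith [h2]

set_option maxHeartbeats 1000000 in
theorem stmt_14 {d : ℕ}
    (f : EuclideanSpace ℝ (Fin d) → ℝ → ℝ)
    (gx : EuclideanSpace ℝ (Fin d) → ℝ → EuclideanSpace ℝ (Fin d))
    (gt : EuclideanSpace ℝ (Fin d) → ℝ → ℝ)
    (L₁ L₂ L₃ Z ζ h : ℝ) (hh : 0 < h)
    (hZ : 0 ≤ Z) (hζZ : Z ≤ ζ) (hζ : 0 < ζ)
    (hgrad : ∀ (t : ℝ) (x : EuclideanSpace ℝ (Fin d)),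
      HasGradientAt (fun y => f y t) (gx x t) x)
    (hgt : ∀ (x : EuclideanSpace ℝ (Fin d)) (t : ℝ),
      HasDerivAt (fun s => f x s) (gt x t) t)
    (hlipgx : ∀ (x y : EuclideanSpace ℝ (Fin d)) (s t : ℝ),
      ‖gx x s - gx y t‖ ≤ L₁ * ‖x - y‖ + L₂ * |s - t|)
    (hlipgt : ∀ (x y : EuclideanSpace ℝ (Fin d)) (s t : ℝ),
      |gt x s - gt y t| ≤ L₂ * ‖x - y‖ + L₃ * |s - t|)
    (hZbound : ∀ (x : EuclideanSpace ℝ (Fin d)) (t : ℝ), |gt x t| ≤ Z * ‖gx x t‖)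
    (xk : EuclideanSpace ℝ (Fin d)) (tk : ℝ)
    (gk : EuclideanSpace ℝ (Fin d))
    (hgkdef : gk = (2 : ℝ) • gx xk tk - gx xk (tk - h))
    (hfd : ‖gx xk tk - gx xk (tk - h)‖ ≤ L₂ * h)
    (hgk : gk ≠ 0)
    (xpred : EuclideanSpace ℝ (Fin d))
    (hxpred : xpred = xk - ((ζ * h) / ‖gk‖) • gk) :
    (inner ℝ (gx xk tk) (xpred - xk) : ℝ) + h * gt xk tk ≤ 2 * h ^ 2 * ζ * L₂ ∧
    f xpred (tk + h) - f xk tk ≤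
      (2 * ζ * L₂ + ζ ^ 2 * L₁ / 2 + ζ * L₂ + L₃ / 2) * h ^ 2 := by
  have hgknorm : (0:ℝ) < ‖gk‖ := norm_pos_iff.2 hgk
  set e : EuclideanSpace ℝ (Fin d) := gx xk tk - gx xk (tk - h) with he
  have hge : gx xk tk = gk - e := by rw [hgkdef, he]; module
  have henorm : ‖e‖ ≤ L₂ * h := hfd
  have hL2h : (0:ℝ) ≤ L₂ * h := le_trans (norm_nonneg e) henorm
  have hL2 : (0:ℝ) ≤ L₂ := nonneg_of_mul_nonneg_right (by linarith [mul_comm L₂ h] : (0:ℝ) ≤ h * L₂) hh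
  set v : EuclideanSpace ℝ (Fin d) := xpred - xk with hv
  have hvdef : v = -(((ζ * h) / ‖gk‖) • gk) := by rw [hv, hxpred]; module
  have hvnorm : ‖v‖ = ζ * h := by
    rw [hvdef, norm_neg, norm_smul, Real.norm_eq_abs, abs_of_pos (by positivity)]
    field_simp
  -- Part 1
  have hinner : (inner ℝ (gx xk tk) v : ℝ) = -((ζ * h) / ‖gk‖) * (‖gk‖^2 - inner ℝ e gk) := by
    rw [hvdef, hge, inner_neg_right, real_inner_smul_right, inner_sub_left,
      real_inner_self_eq_norm_sq]
    ring
  have hieg : (inner ℝ e gk : ℝ) ≤ L₂ * h * ‖gk‖ :=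
    le_trans (real_inner_le_norm e gk) (by nlinarith [norm_nonneg gk])
  have hpart1 : (inner ℝ (gx xk tk) v : ℝ) ≤ -(ζ * h * ‖gk‖) + ζ * h * (L₂ * h) := by
    rw [hinner]
    have heq : -((ζ * h) / ‖gk‖) * (‖gk‖^2 - inner ℝ e gk)
        = -(ζ * h * ‖gk‖) + (ζ * h) * ((inner ℝ e gk : ℝ) / ‖gk‖) := by
      field_simp; ring
    rw [heq]
    have hle : (inner ℝ e gk : ℝ) / ‖gk‖ ≤ L₂ * h := by
      rw [div_le_iff₀ hgknorm]; exact hieg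
    have := mul_le_mul_of_nonneg_left hle (by positivity : (0:ℝ) ≤ ζ * h)
    linarith
  have hgtb : h * gt xk tk ≤ ζ * h * ‖gk‖ + ζ * h * (L₂ * h) := by
    have h1 : |gt xk tk| ≤ Z * ‖gx xk tk‖ := hZbound xk tk
    have h2 : ‖gx xk tk‖ ≤ ‖gk‖ + L₂ * h := by
      rw [hge]; exact le_trans (norm_sub_le _ _) (by linarith)
    have h3 : gt xk tk ≤ ζ * (‖gk‖ + L₂ * h) := by
      have h4 := le_abs_self (gt xk tk)
      nlinarith [norm_nonneg (gx xk tk)]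
    nlinarith
  have part1 : (inner ℝ (gx xk tk) v : ℝ) + h * gt xk tk ≤ 2 * h ^ 2 * ζ * L₂ := by
    linarith [hpart1, hgtb]
  refine ⟨part1, ?_⟩
  -- Part 2 : time step
  have hstep_t : f xk (tk + h) - f xk tk ≤ h * gt xk tk + L₃ * h ^ 2 / 2 := by
    have hder : ∀ s : ℝ, HasDerivAt (fun s => f xk (tk + s)) (gt xk (tk + s)) s := by
      intro s
      have := (hgt xk (tk + s)).comp s ((hasDerivAt_id s).const_add tk)
      exact this.congr_deriv (mul_one _)
    have := taylor_bound_aux (fun s => f xk (tk + s)) (fun s => gt xk (tk + s)) L₃ h hh.le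
      hder ?_
    · simpa using this
    · intro s hs
      have hlt := hlipgt xk xk (tk + s) tk
      simp only [sub_self, norm_zero, mul_zero, zero_add, add_sub_cancel_left] at hlt
      rw [abs_of_nonneg hs.1] at hlt
      simp only [add_zero]
      linarith [(abs_le.1 hlt).2]
  -- Part 2 : space step at time tk + h
  have hDline : ∀ s : ℝ, HasDerivAt (fun s => f (xk + s • v) (tk + h))
      ((inner ℝ (gx (xk + s • v) (tk + h)) v : ℝ)) s := by
    intro s
    have hc : HasDerivAt (fun s : ℝ => xk + s • v) v s := by
      simpa using ((hasDerivAt_id s).smul_const v).const_add xk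
    exact (hgrad (tk + h) (xk + s • v)).hasFDerivAt.comp_hasDerivAt s hc
  have hstep_x : f xpred (tk + h) - f xk (tk + h) ≤
      (inner ℝ (gx xk (tk + h)) v : ℝ) + (L₁ * ‖v‖ ^ 2) / 2 := by
    have hkey := taylor_bound_aux (fun s => f (xk + s • v) (tk + h))
      (fun s => (inner ℝ (gx (xk + s • v) (tk + h)) v : ℝ)) (L₁ * ‖v‖ ^ 2) 1 zero_le_one
      hDline ?_
    · have h1 : xk + (1:ℝ) • v = xpred := by rw [hv]; module
      have h0 : xk + (0:ℝ) • v = xk := by module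
      simp only [h1, h0, one_mul, one_pow] at hkey
      linarith
    · intro s hs
      have h0 : xk + (0:ℝ) • v = xk := by module
      simp only [h0]
      have hd : (inner ℝ (gx (xk + s • v) (tk + h)) v : ℝ) - (inner ℝ (gx xk (tk + h)) v : ℝ)
          = inner ℝ (gx (xk + s • v) (tk + h) - gx xk (tk + h)) v := by
        rw [inner_sub_left]
      have h1 : (inner ℝ (gx (xk + s • v) (tk + h) - gx xk (tk + h)) v : ℝ)
          ≤ ‖gx (xk + s • v) (tk + h) - gx xk (tk + h)‖ * ‖v‖ := real_inner_le_norm _ _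
      have h2 : ‖gx (xk + s • v) (tk + h) - gx xk (tk + h)‖ ≤ L₁ * (s * ‖v‖) := by
        have hlx := hlipgx (xk + s • v) xk (tk + h) (tk + h)
        have hxx : ‖(xk + s • v) - xk‖ = s * ‖v‖ := by
          rw [show (xk + s • v) - xk = s • v by module, norm_smul,
            Real.norm_eq_abs, abs_of_nonneg hs.1]
        rw [hxx] at hlx
        simpa using hlx
      nlinarith [norm_nonneg v, hs.1, norm_nonneg (gx (xk + s • v) (tk + h) - gx xk (tk + h))]
  have hgx_shift : (inner ℝ (gx xk (tk + h)) v : ℝ) ≤ (inner ℝ (gx xk tk) v : ℝ) + L₂ * h * ‖v‖ := by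
    have hd : (inner ℝ (gx xk (tk + h)) v : ℝ) - (inner ℝ (gx xk tk) v : ℝ)
        = inner ℝ (gx xk (tk + h) - gx xk tk) v := by rw [inner_sub_left]
    have h1 : (inner ℝ (gx xk (tk + h) - gx xk tk) v : ℝ)
        ≤ ‖gx xk (tk + h) - gx xk tk‖ * ‖v‖ := real_inner_le_norm _ _
    have h2 : ‖gx xk (tk + h) - gx xk tk‖ ≤ L₂ * h := by
      have hlx := hlipgx xk xk (tk + h) tk
      simpa [abs_of_pos hh] using hlx
    nlinarith [norm_nonneg v]
  have final : f xpred (tk + h) - f xk tk ≤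
      (2 * ζ * L₂ + ζ ^ 2 * L₁ / 2 + ζ * L₂ + L₃ / 2) * h ^ 2 := by
    rw [hvnorm] at hstep_x hgx_shift
    nlinarith [hstep_x, hstep_t, hgx_shift, part1]
  exact final
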